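/- Let (F, β): S → T be an extriangulated functor between triangulated categories (viewed as extriangulated categories via 𝔼(Y,X) = Hom(Y, ΣX)). Define τ_X := β_{ΣX,X}(id_{ΣX}): F(ΣX) → ΣF(X). Then τ is a natural isomorphism and (F, τ) is a triangulated functor, i.e., F sends exact triangles X → W → Y → ΣX to exact triangles F(X) → F(W) → F(Y) → ΣF(X) (with connecting map τ_X ∘ F(h)). -/

import Mathlib

open CategoryTheory Category Limits Pretriangulated
open scoped ZeroObject

/-- An extriangulated functor `(F, β)` between triangulated categories (viewed as
extriangulated categories via `𝔼(Y, X) = Hom(Y, ΣX)`) induces a triangulated functor: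
`τ_X := β(id_{ΣX}) : F(ΣX) → ΣF(X)` is a natural isomorphism and `F` sends exact
triangles `X → W → Y → ΣX` to exact triangles `F(X) → F(W) → F(Y) → ΣF(X)` with
connecting map `τ_X ∘ F(h)`. -/
theorem stmt_13 {S T : Type*} [Category S] [Category T]
    [Preadditive S] [Preadditive T] [HasZeroObject S] [HasZeroObject T]
    [HasShift S ℤ] [HasShift T ℤ]
    [∀ n : ℤ, (CategoryTheory.shiftFunctor S n).Additive]
    [∀ n : ℤ, (CategoryTheory.shiftFunctor T n).Additive]
    [Pretriangulated S] [Pretriangulated T]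
    (F : S ⥤ T) [F.Additive]
    (β : ∀ (X Y : S), (Y ⟶ X⟦(1 : ℤ)⟧) → (F.obj Y ⟶ (F.obj X)⟦(1 : ℤ)⟧))
    -- β is additive
    (hadd : ∀ (X Y : S) (d e : Y ⟶ X⟦(1 : ℤ)⟧), β X Y (d + e) = β X Y d + β X Y e)
    -- β is natural in both variables
    (hnat : ∀ (X X' Y' Y : S) (f : X ⟶ X') (g : Y' ⟶ Y) (d : Y ⟶ X⟦(1 : ℤ)⟧),
      β X' Y' (g ≫ d ≫ f⟦(1 : ℤ)⟧') = F.map g ≫ β X Y d ≫ (F.map f)⟦(1 : ℤ)⟧')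
    -- (F, β) sends extriangles to extriangles
    (htri : ∀ (X W Y : S) (f : X ⟶ W) (g : W ⟶ Y) (d : Y ⟶ X⟦(1 : ℤ)⟧),
      Triangle.mk f g d ∈ (distTriang S) →
        Triangle.mk (F.map f) (F.map g) (β X Y d) ∈ distTriang T) :
    (∀ X : S, IsIso (β X (X⟦(1 : ℤ)⟧) (𝟙 (X⟦(1 : ℤ)⟧)))) ∧
    (∀ (X Y : S) (f : X ⟶ Y),
        F.map (f⟦(1 : ℤ)⟧') ≫ β Y (Y⟦(1 : ℤ)⟧) (𝟙 (Y⟦(1 : ℤ)⟧)) =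
          β X (X⟦(1 : ℤ)⟧) (𝟙 (X⟦(1 : ℤ)⟧)) ≫ (F.map f)⟦(1 : ℤ)⟧') ∧
    (∀ (X W Y : S) (f : X ⟶ W) (g : W ⟶ Y) (d : Y ⟶ X⟦(1 : ℤ)⟧),
        Triangle.mk f g d ∈ (distTriang S) →
          Triangle.mk (F.map f) (F.map g)
              (F.map d ≫ β X (X⟦(1 : ℤ)⟧) (𝟙 (X⟦(1 : ℤ)⟧))) ∈ distTriang T) := by
  -- key: β d = F.map d ≫ τ_X
  have key : ∀ (X Y : S) (d : Y ⟶ X⟦(1 : ℤ)⟧),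
      β X Y d = F.map d ≫ β X (X⟦(1 : ℤ)⟧) (𝟙 _) := by
    intro X Y d
    have := hnat X X Y (X⟦(1 : ℤ)⟧) (𝟙 X) d (𝟙 _)
    simpa using this
  have τnat : ∀ (X Y : S) (f : X ⟶ Y),
      F.map (f⟦(1 : ℤ)⟧') ≫ β Y (Y⟦(1 : ℤ)⟧) (𝟙 (Y⟦(1 : ℤ)⟧)) =
        β X (X⟦(1 : ℤ)⟧) (𝟙 (X⟦(1 : ℤ)⟧)) ≫ (F.map f)⟦(1 : ℤ)⟧' := by
    intro X Y f
    have h1 := hnat Y Y (X⟦(1 : ℤ)⟧) (Y⟦(1 : ℤ)⟧) (𝟙 Y) (f⟦(1 : ℤ)⟧') (𝟙 _)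
    have h2 := hnat X Y (X⟦(1 : ℤ)⟧) (X⟦(1 : ℤ)⟧) f (𝟙 _) (𝟙 _)
    simp at h1 h2
    rw [← h1, h2]
  refine ⟨?_, τnat, ?_⟩
  · intro X
    have hT1 := htri _ _ _ _ _ _ (contractible_distinguished₂ X)
    have hT2 := contractible_distinguished₂ (F.obj X)
    obtain ⟨e, he⟩ : ∃ e : Triangle.mk (F.map (0 : X ⟶ 0)) (F.map (0 : (0 : S) ⟶ X⟦(1 : ℤ)⟧))
        (β X (X⟦(1 : ℤ)⟧) (𝟙 _)) ≅ Triangle.mk (0 : F.obj X ⟶ 0) 0 (𝟙 ((F.obj X)⟦(1 : ℤ)⟧)),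
        e.hom.hom₁ = 𝟙 _ :=
      ⟨isoTriangleOfIso₁₂ _ _ hT1 hT2 (Iso.refl _) F.mapZeroObject (by exact (isZero_zero T).eq_of_tgt _ _), rfl⟩
    have hiso : IsIso e.hom.hom₃ := by
      change IsIso ((Triangle.π₃).map e.hom)
      infer_instance
    have hc := e.hom.comm₃
    rw [he] at hc
    simp only [Triangle.mk_mor₃, Triangle.mk_obj₁, CategoryTheory.Functor.map_id, comp_id] at hc
    have hc' : β X (X⟦(1 : ℤ)⟧) (𝟙 _) = e.hom.hom₃ := by
      exact ((comp_id _).symm.trans (congrArg (fun k => β X (X⟦(1 : ℤ)⟧) (𝟙 _) ≫ k) ((shiftFunctor T (1 : ℤ)).map_id _).symm)).trans (hc.trans (comp_id _))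
    rw [hc']
    exact hiso
  · intro X W Y f g d hT
    rw [← key]
    exact htri X W Y f g d hT
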